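/- If action models A and B admit a generalized action emulation, then they admit one of the specific form η(x,y) = ⋀_{a∈A} □_a ξ_{x,y}^a for suitable formulas ξ_{x,y}^a. Concretely, given a generalized action emulation η', setting ξ_{x,y}^a := ⋀_{x→_a x'}(Pre^A(x') → ⋁_{y→_a y'}(Pre^B(y') ∧ η'(x',y'))) ∧ ⋀_{y→_a y'}(Pre^B(y') → ⋁_{x→_a x'}(Pre^A(x') ∧ η'(x',y'))) makes η(x,y) := ⋀_a □_a ξ_{x,y}^a a generalized action emulation. -/
import Mathlib


/-- Modal formulas over label set `A` and proposition set `P`. -/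
inductive Form (A P : Type) : Type
  | top : Form A P
  | atom : P → Form A P
  | neg : Form A P → Form A P
  | or : Form A P → Form A P → Form A P
  | dia : A → Form A P → Form A P

namespace Form
variable {A P : Type}
def and (φ ψ : Form A P) : Form A P := Form.neg ((Form.neg φ).or (Form.neg ψ))
def box (a : A) (φ : Form A P) : Form A P := Form.neg (Form.dia a (Form.neg φ))
def bot : Form A P := Form.neg Form.top
def imp (φ ψ : Form A P) : Form A P := (Form.neg φ).or ψ
end Form

/-- Kripke models. -/
structure Kripke (A P : Type) : Type 1 where
  W : Type
  val : W → P → Prop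
  rel : A → W → W → Prop
  actual : Set W

variable {A P : Type}

/-- Satisfaction of a modal formula at a world. -/
def sat (M : Kripke A P) : M.W → Form A P → Prop
  | _, .top => True
  | w, .atom p => M.val w p
  | w, .neg φ => ¬ sat M w φ
  | w, .or φ ψ => sat M w φ ∨ sat M w ψ
  | w, .dia a φ => ∃ v, M.rel a w v ∧ sat M v φ

/-- Semantic entailment over all Kripke models. -/
def entails (φ ψ : Form A P) : Prop := ∀ (M : Kripke A P) (w : M.W), sat M w φ → sat M w ψ

/-- Semantic equivalence. -/
def equivF (φ ψ : Form A P) : Prop := entails φ ψ ∧ entails ψ φ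

def satisfiable (φ : Form A P) : Prop := ∃ (M : Kripke A P) (w : M.W), sat M w φ

def valid (φ : Form A P) : Prop := ∀ (M : Kripke A P) (w : M.W), sat M w φ

/-- Finite disjunction (empty disjunction is `⊥`). -/
def bigOr : List (Form A P) → Form A P
  | [] => Form.bot
  | φ :: l => φ.or (bigOr l)

/-- Finite conjunction (empty conjunction is `⊤`). -/
def bigAnd : List (Form A P) → Form A P
  | [] => Form.top
  | φ :: l => φ.and (bigAnd l)

/-- `⋀_{a ∈ A} □_a (ξ a)` for a finite label set `A`. -/
noncomputable def boxConj [Fintype A] (ξ : A → Form A P) : Form A P :=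
  bigAnd ((Finset.univ : Finset A).toList.map fun a => Form.box a (ξ a))

/-- `R` is a bisimulation between Kripke models `M` and `N`. -/
def IsBisim (M N : Kripke A P) (R : M.W → N.W → Prop) : Prop :=
  ∀ w v, R w v →
    ((∀ p, M.val w p ↔ N.val v p) ∧
     (∀ a w', M.rel a w w' → ∃ v', N.rel a v v' ∧ R w' v') ∧
     (∀ a v', N.rel a v v' → ∃ w', M.rel a w w' ∧ R w' v'))

/-- Pointed bisimilarity of Kripke models (Zig0/Zag0 on actual worlds). -/
def Bisimilar (M N : Kripke A P) : Prop :=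
  ∃ R, IsBisim M N R ∧ (∀ w ∈ M.actual, ∃ v ∈ N.actual, R w v) ∧
       (∀ v ∈ N.actual, ∃ w ∈ M.actual, R w v)

/-- Action models. -/
structure ActionModel (A P : Type) : Type 1 where
  E : Type
  pre : E → Form A P
  rel : A → E → E → Prop
  actual : Set E

/-- The update product `M ⊗ 𝔄`. -/
def update (M : Kripke A P) (𝔄 : ActionModel A P) : Kripke A P where
  W := {p : M.W × 𝔄.E // sat M p.1 (𝔄.pre p.2)}
  val w p := M.val w.1.1 p
  rel a w v := M.rel a w.1.1 v.1.1 ∧ 𝔄.rel a w.1.2 v.1.2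
  actual := {w | w.1.1 ∈ M.actual ∧ w.1.2 ∈ 𝔄.actual}

/-- Action model equivalence: same updating effect (up to bisimilarity) on every Kripke model. -/
def AMEquiv (𝔄 𝔅 : ActionModel A P) : Prop :=
  ∀ M : Kripke A P, Bisimilar (update M 𝔄) (update M 𝔅)

/-- `S` is an action bisimulation between action models `𝔄` and `𝔅`. -/
def IsActBisim (𝔄 𝔅 : ActionModel A P) (S : 𝔄.E → 𝔅.E → Prop) : Prop :=
  ∀ x y, S x y →
    (equivF (𝔄.pre x) (𝔅.pre y) ∧
     (∀ a x', 𝔄.rel a x x' → satisfiable ((𝔄.pre x).and (Form.dia a (𝔄.pre x'))) →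
        ∃ y', 𝔅.rel a y y' ∧ S x' y') ∧
     (∀ a y', 𝔅.rel a y y' → satisfiable ((𝔅.pre y).and (Form.dia a (𝔅.pre y'))) →
        ∃ x', 𝔄.rel a x x' ∧ S x' y'))

/-- Action bisimilarity of action models (with Zig0/Zag0 on actual events). -/
def ActBisimilar (𝔄 𝔅 : ActionModel A P) : Prop :=
  ∃ S, IsActBisim 𝔄 𝔅 S ∧ (∀ x ∈ 𝔄.actual, ∃ y ∈ 𝔅.actual, S x y) ∧
       (∀ y ∈ 𝔅.actual, ∃ x ∈ 𝔄.actual, S x y)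

/-- Zig of the generalized action emulation:
`η(x,y) ⊨ □_a (Pre^𝔄(x') → ⋁_{y →_a y'} (Pre^𝔅(y') ∧ η(x',y')))`, rendered semantically. -/
def GAEZig (𝔄 𝔅 : ActionModel A P) (η : 𝔄.E → 𝔅.E → Form A P) : Prop :=
  ∀ (a : A) (x : 𝔄.E) (y : 𝔅.E) (x' : 𝔄.E), 𝔄.rel a x x' →
    ∀ (M : Kripke A P) (w v : M.W), sat M w (η x y) → M.rel a w v → sat M v (𝔄.pre x') →
      ∃ y', 𝔅.rel a y y' ∧ sat M v (𝔅.pre y') ∧ sat M v (η x' y')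

/-- Zag of the generalized action emulation. -/
def GAEZag (𝔄 𝔅 : ActionModel A P) (η : 𝔄.E → 𝔅.E → Form A P) : Prop :=
  ∀ (a : A) (x : 𝔄.E) (y : 𝔅.E) (y' : 𝔅.E), 𝔅.rel a y y' →
    ∀ (M : Kripke A P) (w v : M.W), sat M w (η x y) → M.rel a w v → sat M v (𝔅.pre y') →
      ∃ x', 𝔄.rel a x x' ∧ sat M v (𝔄.pre x') ∧ sat M v (η x' y')

/-- Zig0 of the generalized action emulation:
`Pre^𝔄(x) ⊨ ⋁_{y ∈ E₀^𝔅} (Pre^𝔅(y) ∧ η(x,y))` for actual `x`. -/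
def GAEZig0 (𝔄 𝔅 : ActionModel A P) (η : 𝔄.E → 𝔅.E → Form A P) : Prop :=
  ∀ x ∈ 𝔄.actual, ∀ (M : Kripke A P) (w : M.W), sat M w (𝔄.pre x) →
    ∃ y ∈ 𝔅.actual, sat M w (𝔅.pre y) ∧ sat M w (η x y)

/-- Zag0 of the generalized action emulation. -/
def GAEZag0 (𝔄 𝔅 : ActionModel A P) (η : 𝔄.E → 𝔅.E → Form A P) : Prop :=
  ∀ y ∈ 𝔅.actual, ∀ (M : Kripke A P) (w : M.W), sat M w (𝔅.pre y) →
    ∃ x ∈ 𝔄.actual, sat M w (𝔄.pre x) ∧ sat M w (η x y)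

/-- `η` is a generalized action emulation witnessing `𝔄 ⇄_G 𝔅`. -/
def IsGAE (𝔄 𝔅 : ActionModel A P) (η : 𝔄.E → 𝔅.E → Form A P) : Prop :=
  GAEZig 𝔄 𝔅 η ∧ GAEZag 𝔄 𝔅 η ∧ GAEZig0 𝔄 𝔅 η ∧ GAEZag0 𝔄 𝔅 η

/-- `S` is a propositional action emulation witnessing `𝔄 ⇄_P 𝔅`
(Consistency, Zig, Zag, Zig0, Zag0; disjunctions rendered semantically). -/
def IsPAEW (𝔄 𝔅 : ActionModel A P) (S : 𝔄.E → 𝔅.E → Prop) : Prop :=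
  (∀ x y, S x y → satisfiable ((𝔄.pre x).and (𝔅.pre y))) ∧
  (∀ (a : A) x y x', S x y → 𝔄.rel a x x' →
     ∀ (M : Kripke A P) (w : M.W), sat M w (𝔄.pre x') →
       ∃ y', 𝔅.rel a y y' ∧ S x' y' ∧ sat M w (𝔅.pre y')) ∧
  (∀ (a : A) x y y', S x y → 𝔅.rel a y y' →
     ∀ (M : Kripke A P) (w : M.W), sat M w (𝔅.pre y') →
       ∃ x', 𝔄.rel a x x' ∧ S x' y' ∧ sat M w (𝔄.pre x')) ∧
  (∀ x ∈ 𝔄.actual, ∀ (M : Kripke A P) (w : M.W), sat M w (𝔄.pre x) →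
     ∃ y ∈ 𝔅.actual, S x y ∧ sat M w (𝔅.pre y)) ∧
  (∀ y ∈ 𝔅.actual, ∀ (M : Kripke A P) (w : M.W), sat M w (𝔅.pre y) →
     ∃ x ∈ 𝔄.actual, S x y ∧ sat M w (𝔄.pre x))

/-- `S` is an action emulation witnessing `𝔄 ⇄ 𝔅`
(Consistency, Zig, Zag, Zig0, Zag0; disjunctions and boxes rendered semantically). -/
def IsAEW (𝔄 𝔅 : ActionModel A P) (S : 𝔄.E → 𝔅.E → Prop) : Prop :=
  (∀ x y, S x y → satisfiable ((𝔄.pre x).and (𝔅.pre y))) ∧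
  (∀ (a : A) x y x', S x y → 𝔄.rel a x x' →
     ∀ (M : Kripke A P) (w v : M.W), sat M w (𝔄.pre x) → sat M w (𝔅.pre y) →
       M.rel a w v → sat M v (𝔄.pre x') →
       ∃ y', 𝔅.rel a y y' ∧ S x' y' ∧ sat M v (𝔅.pre y')) ∧
  (∀ (a : A) x y y', S x y → 𝔅.rel a y y' →
     ∀ (M : Kripke A P) (w v : M.W), sat M w (𝔄.pre x) → sat M w (𝔅.pre y) →
       M.rel a w v → sat M v (𝔅.pre y') →
       ∃ x', 𝔄.rel a x x' ∧ S x' y' ∧ sat M v (𝔄.pre x')) ∧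
  (∀ x ∈ 𝔄.actual, ∀ (M : Kripke A P) (w : M.W), sat M w (𝔄.pre x) →
     ∃ y ∈ 𝔅.actual, S x y ∧ sat M w (𝔅.pre y)) ∧
  (∀ y ∈ 𝔅.actual, ∀ (M : Kripke A P) (w : M.W), sat M w (𝔅.pre y) →
     ∃ x ∈ 𝔄.actual, S x y ∧ sat M w (𝔄.pre x))

/-- `L₀`: formulas `α` such that if `α` is satisfiable and `α ⊨ □_a φ` then `φ` is valid. -/
def L0 : Set (Form A P) :=
  {α | satisfiable α → ∀ (a : A) (φ : Form A P), entails α (Form.box a φ) → valid φ}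

/-- `Φ` is `Ψ`-regular. -/
def Regular (Φ Ψ : Set (Form A P)) : Prop :=
  ∀ φ ∈ Φ, ∀ ψ ∈ Ψ, entails ψ φ ∨ entails ψ φ.neg

/-- `Φ` is `Ψ`-basis: every `φ ∈ Φ` is equivalent to a disjunction of a subset of `Ψ`
(disjunction rendered semantically). -/
def IsBasisFor (Φ Ψ : Set (Form A P)) : Prop :=
  ∀ φ ∈ Φ, ∃ Ψ' ⊆ Ψ, ∀ (M : Kripke A P) (w : M.W), sat M w φ ↔ ∃ ψ ∈ Ψ', sat M w ψ

/-- `Φ` is `Ψ`-discrete: if `φ ∈ Φ` entails a finite disjunction `⋁_l ⋀_a □_a ξ_l^a`, then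
`φ ⊨ ⋁_l ⋁ G(⋀_a □_a ξ_l^a, Ψ)` (outer disjunctions rendered semantically). -/
def Discrete [Fintype A] (Φ Ψ : Set (Form A P)) : Prop :=
  ∀ φ ∈ Φ, ∀ (L : ℕ) (ξ : Fin L → A → Form A P),
    entails φ (bigOr ((List.finRange L).map fun l => boxConj (ξ l))) →
    ∀ (M : Kripke A P) (w : M.W), sat M w φ →
      ∃ (l : Fin L), ∃ ψ ∈ Ψ, entails ψ (boxConj (ξ l)) ∧ sat M w ψ

/-- `Φ` is `Ψ`-known: if `φ ∈ Φ` and `φ ⊨ □_a ξ`, then `φ ⊨ □_a ⋁ G(ξ, Ψ)`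
(inner disjunction rendered semantically). -/
def Known (Φ Ψ : Set (Form A P)) : Prop :=
  ∀ φ ∈ Φ, ∀ (a : A) (χ : Form A P), entails φ (Form.box a χ) →
    ∀ (M : Kripke A P) (w v : M.W), sat M w φ → M.rel a w v →
      ∃ ψ ∈ Ψ, entails ψ χ ∧ sat M v ψ

/-- `R_a^𝔄(x)`. -/
def Rset (𝔄 : ActionModel A P) (a : A) (x : 𝔄.E) : Set 𝔄.E :=
  {y | satisfiable ((𝔄.pre x).and (Form.dia a (𝔄.pre y)))}

/-- `Q_a^𝔄(x)`. -/
def Qset (𝔄 : ActionModel A P) (a : A) (x : 𝔄.E) : Set 𝔄.E :=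
  {y | 𝔄.rel a x y ∧ satisfiable ((𝔄.pre x).and (Form.dia a (𝔄.pre y)))}

/-- Modal depth. -/
def depth : Form A P → ℕ
  | .top => 0
  | .atom _ => 0
  | .neg φ => depth φ
  | .or φ ψ => max (depth φ) (depth ψ)
  | .dia _ φ => depth φ + 1

/-- Subformulas. -/
def Subf : Form A P → List (Form A P)
  | .top => [.top]
  | .atom p => [.atom p]
  | .neg φ => .neg φ :: Subf φ
  | .or φ ψ => .or φ ψ :: (Subf φ ++ Subf ψ)
  | .dia a φ => .dia a φ :: Subf φ

/-- Single negation. -/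
def singleNeg : Form A P → Form A P
  | .neg φ => φ
  | φ => .neg φ

/-- Closure under subformulas and single negations. -/
def closureF (φ : Form A P) : Set (Form A P) :=
  {χ | χ ∈ Subf φ ∨ ∃ ψ ∈ Subf φ, χ = singleNeg ψ}

open Classical

/-- The formula `ξ_{x,y}^a` built from a generalized action emulation `η'`:
`⋀_{x →_a x'}(Pre^𝔄(x') → ⋁_{y →_a y'}(Pre^𝔅(y') ∧ η'(x',y'))) ∧
 ⋀_{y →_a y'}(Pre^𝔅(y') → ⋁_{x →_a x'}(Pre^𝔄(x') ∧ η'(x',y')))`. -/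
noncomputable def xiDef (𝔄 𝔅 : ActionModel A P) [Fintype 𝔄.E] [Fintype 𝔅.E]
    (η' : 𝔄.E → 𝔅.E → Form A P) (x : 𝔄.E) (y : 𝔅.E) (a : A) : Form A P :=
  (bigAnd (((Finset.univ.filter (fun x' => 𝔄.rel a x x')).toList).map (fun x' =>
      (𝔄.pre x').imp (bigOr (((Finset.univ.filter (fun y' => 𝔅.rel a y y')).toList).map
        (fun y' => (𝔅.pre y').and (η' x' y'))))))).and
  (bigAnd (((Finset.univ.filter (fun y' => 𝔅.rel a y y')).toList).map (fun y' =>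
      (𝔅.pre y').imp (bigOr (((Finset.univ.filter (fun x' => 𝔄.rel a x x')).toList).map
        (fun x' => (𝔄.pre x').and (η' x' y')))))))

lemma sat_and {M : Kripke A P} {w : M.W} {φ ψ : Form A P} :
    sat M w (φ.and ψ) ↔ sat M w φ ∧ sat M w ψ := by
  simp [Form.and, sat]

lemma sat_imp {M : Kripke A P} {w : M.W} {φ ψ : Form A P} :
    sat M w (φ.imp ψ) ↔ (sat M w φ → sat M w ψ) := by
  simp [Form.imp, sat]; tauto

lemma sat_box {M : Kripke A P} {w : M.W} {a : A} {φ : Form A P} :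
    sat M w (Form.box a φ) ↔ ∀ v, M.rel a w v → sat M v φ := by
  simp [Form.box, sat]

lemma sat_bigAnd {M : Kripke A P} {w : M.W} {l : List (Form A P)} :
    sat M w (bigAnd l) ↔ ∀ φ ∈ l, sat M w φ := by
  induction l with
  | nil => simp [bigAnd, sat]
  | cons φ l ih => simp [bigAnd, sat_and, ih]

lemma sat_bigOr {M : Kripke A P} {w : M.W} {l : List (Form A P)} :
    sat M w (bigOr l) ↔ ∃ φ ∈ l, sat M w φ := by
  induction l with
  | nil => simp [bigOr, Form.bot, sat]
  | cons φ l ih => simp [bigOr, sat, ih]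

lemma sat_boxConj [Fintype A] {M : Kripke A P} {w : M.W} {ξ : A → Form A P} :
    sat M w (boxConj ξ) ↔ ∀ a, ∀ v, M.rel a w v → sat M v (ξ a) := by
  unfold boxConj
  rw [sat_bigAnd]
  constructor
  · intro H a v hv
    have := H (Form.box a (ξ a)) (by simp)
    exact (sat_box.mp this) v hv
  · intro H φ hφ
    simp only [List.mem_map] at hφ
    obtain ⟨a, -, rfl⟩ := hφ
    exact sat_box.mpr (H a)

lemma sat_xiDef [Fintype A] (𝔄 𝔅 : ActionModel A P) [Fintype 𝔄.E] [Fintype 𝔅.E]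
    (η' : 𝔄.E → 𝔅.E → Form A P) (x : 𝔄.E) (y : 𝔅.E) (a : A)
    {M : Kripke A P} {v : M.W} :
    sat M v (xiDef 𝔄 𝔅 η' x y a) ↔
      ((∀ x', 𝔄.rel a x x' → sat M v (𝔄.pre x') →
          ∃ y', 𝔅.rel a y y' ∧ sat M v (𝔅.pre y') ∧ sat M v (η' x' y')) ∧
       (∀ y', 𝔅.rel a y y' → sat M v (𝔅.pre y') →
          ∃ x', 𝔄.rel a x x' ∧ sat M v (𝔄.pre x') ∧ sat M v (η' x' y'))) := by
  unfold xiDef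
  rw [sat_and, sat_bigAnd, sat_bigAnd]
  constructor
  · rintro ⟨H1, H2⟩
    constructor
    · intro x' hrel hpre
      have := H1 _ (List.mem_map.mpr ⟨x', by simp [Finset.mem_toList, hrel], rfl⟩)
      have := sat_imp.mp this hpre
      rw [sat_bigOr] at this
      obtain ⟨φ, hφ, hsat⟩ := this
      simp only [List.mem_map, Finset.mem_toList, Finset.mem_filter] at hφ
      obtain ⟨y', ⟨-, hy'⟩, rfl⟩ := hφ
      rw [sat_and] at hsat
      exact ⟨y', hy', hsat.1, hsat.2⟩
    · intro y' hrel hpre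
      have := H2 _ (List.mem_map.mpr ⟨y', by simp [Finset.mem_toList, hrel], rfl⟩)
      have := sat_imp.mp this hpre
      rw [sat_bigOr] at this
      obtain ⟨φ, hφ, hsat⟩ := this
      simp only [List.mem_map, Finset.mem_toList, Finset.mem_filter] at hφ
      obtain ⟨x', ⟨-, hx'⟩, rfl⟩ := hφ
      rw [sat_and] at hsat
      exact ⟨x', hx', hsat.1, hsat.2⟩
  · rintro ⟨H1, H2⟩
    constructor
    · intro φ hφ
      simp only [List.mem_map, Finset.mem_toList, Finset.mem_filter] at hφ
      obtain ⟨x', ⟨-, hx'⟩, rfl⟩ := hφ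
      rw [sat_imp]
      intro hpre
      obtain ⟨y', hy', hp, he⟩ := H1 x' hx' hpre
      rw [sat_bigOr]
      exact ⟨_, List.mem_map.mpr ⟨y', by simp [Finset.mem_toList, hy'], rfl⟩,
        sat_and.mpr ⟨hp, he⟩⟩
    · intro φ hφ
      simp only [List.mem_map, Finset.mem_toList, Finset.mem_filter] at hφ
      obtain ⟨y', ⟨-, hy'⟩, rfl⟩ := hφ
      rw [sat_imp]
      intro hpre
      obtain ⟨x', hx', hp, he⟩ := H2 y' hy' hpre
      rw [sat_bigOr]
      exact ⟨_, List.mem_map.mpr ⟨x', by simp [Finset.mem_toList, hx'], rfl⟩,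
        sat_and.mpr ⟨hp, he⟩⟩

/-- Key step: if `η'` is a GAE, then satisfaction of `η' x y` at a world implies
satisfaction of the box form at that world. -/
lemma eta_to_box [Fintype A] (𝔄 𝔅 : ActionModel A P) [Fintype 𝔄.E] [Fintype 𝔅.E]
    (η' : 𝔄.E → 𝔅.E → Form A P) (h : IsGAE 𝔄 𝔅 η') (x : 𝔄.E) (y : 𝔅.E)
    {M : Kripke A P} {w : M.W} (hw : sat M w (η' x y)) :
    sat M w (boxConj (fun a => xiDef 𝔄 𝔅 η' x y a)) := by
  obtain ⟨hzig, hzag, -, -⟩ := h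
  rw [sat_boxConj]
  intro a v hv
  rw [sat_xiDef]
  exact ⟨fun x' hrel hpre => hzig a x y x' hrel M w v hw hv hpre,
         fun y' hrel hpre => hzag a x y y' hrel M w v hw hv hpre⟩

/-- if `𝔄` and `𝔅` admit a generalized action emulation `η'`, then
`η(x,y) := ⋀_{a ∈ A} □_a ξ_{x,y}^a` (with `ξ` the concrete formulas above) is again a
generalized action emulation. -/
theorem gae_box_form [Fintype A] (𝔄 𝔅 : ActionModel A P) [Fintype 𝔄.E] [Fintype 𝔅.E]
    (η' : 𝔄.E → 𝔅.E → Form A P) (h : IsGAE 𝔄 𝔅 η') :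
    IsGAE 𝔄 𝔅 (fun x y => boxConj (fun a => xiDef 𝔄 𝔅 η' x y a)) := by
  obtain ⟨hzig, hzag, hzig0, hzag0⟩ := h
  refine ⟨?_, ?_, ?_, ?_⟩
  · intro a x y x' hrel M w v hw hv hpre
    have hxi := (sat_boxConj.mp hw) a v hv
    obtain ⟨y', hy', hp, he⟩ := (sat_xiDef 𝔄 𝔅 η' x y a).mp hxi |>.1 x' hrel hpre
    exact ⟨y', hy', hp, eta_to_box 𝔄 𝔅 η' ⟨hzig, hzag, hzig0, hzag0⟩ x' y' he⟩
  · intro a x y y' hrel M w v hw hv hpre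
    have hxi := (sat_boxConj.mp hw) a v hv
    obtain ⟨x', hx', hp, he⟩ := (sat_xiDef 𝔄 𝔅 η' x y a).mp hxi |>.2 y' hrel hpre
    exact ⟨x', hx', hp, eta_to_box 𝔄 𝔅 η' ⟨hzig, hzag, hzig0, hzag0⟩ x' y' he⟩
  · intro x hx M w hw
    obtain ⟨y, hy, hp, he⟩ := hzig0 x hx M w hw
    exact ⟨y, hy, hp, eta_to_box 𝔄 𝔅 η' ⟨hzig, hzag, hzig0, hzag0⟩ x y he⟩
  · intro y hy M w hw
    obtain ⟨x, hx, hp, he⟩ := hzag0 y hy M w hw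
    exact ⟨x, hx, hp, eta_to_box 𝔄 𝔅 η' ⟨hzig, hzag, hzig0, hzag0⟩ x y he⟩
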